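/- In the band presentation of B₃, for every index i (taken modulo 3) and every integer k ≥ 1, one has aᵢ⁻ᵏ = δ⁻ᵏ · a_{i+2−k} a_{i+3−k} ⋯ a_i a_{i+1}, where the right-hand factor is the product of k generators whose subscripts (modulo 3) increase by 1 at each step and end with a_i a_{i+1}. -/

import Mathlib

/-- The band relations `a₂a₁ = a₃a₂ = a₁a₃`, with subscripts taken modulo 3
(the generator `a₃` is indexed by `0 : ZMod 3`). -/
def bandRels : Set (FreeGroup (ZMod 3)) :=
  { FreeGroup.of 2 * FreeGroup.of 1 * (FreeGroup.of 0 * FreeGroup.of 2)⁻¹,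
    FreeGroup.of 0 * FreeGroup.of 2 * (FreeGroup.of 1 * FreeGroup.of 0)⁻¹ }

/-- The band-presented group `⟨a₁, a₂, a₃ | a₂a₁ = a₃a₂ = a₁a₃⟩` (a model of `B₃`). -/
abbrev BandB3 := PresentedGroup bandRels

/-- The band generators `a i`, indexed by `ZMod 3` (so `a 0 = a₃`). -/
def a (i : ZMod 3) : BandB3 := PresentedGroup.of i

/-- The fundamental element `δ = a₂a₁ (= a₃a₂ = a₁a₃)`. -/
def δ : BandB3 := a 2 * a 1

lemma rel_one {r : FreeGroup (ZMod 3)} (hr : r ∈ bandRels) :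
    PresentedGroup.mk bandRels r = 1 := by
  apply (QuotientGroup.eq_one_iff _).mpr
  exact Subgroup.subset_normalClosure hr

lemma rel1 : a 2 * a 1 = a 0 * a 2 := by
  have h := rel_one (r := FreeGroup.of 2 * FreeGroup.of 1 * (FreeGroup.of 0 * FreeGroup.of 2)⁻¹)
    (by left; rfl)
  simp only [map_mul, map_inv] at h
  have := mul_inv_eq_one.mp h
  simpa [a, PresentedGroup.of] using this

lemma rel2 : a 0 * a 2 = a 1 * a 0 := by
  have h := rel_one (r := FreeGroup.of 0 * FreeGroup.of 2 * (FreeGroup.of 1 * FreeGroup.of 0)⁻¹)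
    (by right; rfl)
  simp only [map_mul, map_inv] at h
  have := mul_inv_eq_one.mp h
  simpa [a, PresentedGroup.of] using this

lemma delta_eq (j : ZMod 3) : a (j + 1) * a j = δ := by
  fin_cases j
  · show a 1 * a 0 = δ
    rw [← rel2, ← rel1]; rfl
  · rfl
  · show a (2+1) * a 2 = δ
    rw [show ((2:ZMod 3)+1) = 0 by decide, ← rel1]; rfl

lemma delta_comm (j : ZMod 3) : δ * a j = a (j + 2) * δ := by
  have h := delta_eq (j + 1)
  rw [show j + 1 + 1 = j + 2 by ring] at h
  calc δ * a j = a (j + 2) * a (j + 1) * a j := by rw [h]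
    _ = a (j + 2) * δ := by rw [mul_assoc, delta_eq]

lemma a_mul_delta_inv (j : ZMod 3) : a j * δ⁻¹ = δ⁻¹ * a (j + 2) := by
  have h : a j * δ⁻¹ = δ⁻¹ * (δ * a j) * δ⁻¹ := by group
  rw [h, delta_comm]; group

lemma a_mul_delta_zpow (j : ZMod 3) (k : ℕ) :
    a j * δ ^ (-(k : ℤ)) = δ ^ (-(k : ℤ)) * a (j + 2 * k) := by
  induction k with
  | zero => simp
  | succ n ih =>
    have hc : j + 2 * ((n : ℕ) : ZMod 3) + 2 = j + 2 * (((n + 1 : ℕ)) : ZMod 3) := by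
      push_cast; ring
    have hexp : (-(↑(n+1) : ℤ)) = -(n:ℤ) + -1 := by push_cast; ring
    rw [hexp, zpow_add, ← mul_assoc, ih, mul_assoc, zpow_neg_one, a_mul_delta_inv,
      ← mul_assoc, hc]

theorem band_inverse_formula (i : ZMod 3) (k : ℕ) (hk : 1 ≤ k) :
    (a i) ^ (-(k : ℤ)) =
      δ ^ (-(k : ℤ)) *
        ((List.range k).map (fun j => a (i + 2 - (k : ZMod 3) + (j : ZMod 3)))).prod := by
  induction k, hk using Nat.le_induction with
  | base =>
    have hinv : (a i)⁻¹ = δ⁻¹ * a (i + 1) := by rw [← delta_eq i]; group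
    simp only [List.range_succ, List.range_zero, List.nil_append, List.map_cons, List.map_nil,
      List.prod_cons, List.prod_nil, mul_one, Nat.cast_one, Nat.cast_zero, add_zero, zpow_neg_one]
    rw [hinv]
    congr 2
    ring
  | succ n hn ih =>
    have hinv : (a i)⁻¹ = δ⁻¹ * a (i + 1) := by rw [← delta_eq i]; group
    have hexp : (-(↑(n+1) : ℤ)) = -1 + -(n:ℤ) := by push_cast; ring
    have h3 : (3 : ZMod 3) = 0 := rfl
    have h1 : i + 1 + 2 * ((n : ℕ) : ZMod 3) = i + 2 - (((n+1 : ℕ)) : ZMod 3) + (((0:ℕ)) : ZMod 3) := by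
      push_cast
      linear_combination ((n : ZMod 3)) * h3
    have h2 : ∀ j : ℕ, a (i + 2 - (((n+1:ℕ)) : ZMod 3) + ((j + 1 : ℕ) : ZMod 3))
        = a (i + 2 - ((n:ℕ) : ZMod 3) + ((j : ℕ) : ZMod 3)) := by
      intro j; congr 1; push_cast; ring
    rw [hexp, zpow_add, zpow_add, ih, zpow_neg_one, zpow_neg_one, hinv,
      mul_assoc (δ⁻¹), ← mul_assoc (a (i+1)), a_mul_delta_zpow, h1,
      List.range_succ_eq_map]
    have key : ∀ (l : List ℕ),
        (List.map (fun j => a (i + 2 - ((n : ZMod 3) + 1) + j))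
          ((List.map Nat.succ l).flatMap fun (b : ℕ) => ([(↑b : ZMod 3)]))).prod
        = (List.map (fun j => a (i + 2 - (n : ZMod 3) + j))
          (l.flatMap fun (b : ℕ) => [(↑b : ZMod 3)])).prod := by
      intro l
      induction l with
      | nil => simp
      | cons b t iht =>
        have h2' : a (i + 2 - ((n : ZMod 3) + 1) + ((b : ZMod 3) + 1))
            = a (i + 2 - (n : ZMod 3) + (b : ZMod 3)) := by
          congr 1; ring
        simp only [List.map_cons, List.flatMap_cons, List.map_append, List.prod_append,
          List.map_cons, List.map_nil, List.prod_cons, List.prod_nil, Nat.succ_eq_add_one,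
          Nat.cast_add, Nat.cast_one, mul_one]
        rw [h2', iht]
    simp only [List.pure_def, List.bind_eq_flatMap, zpow_neg, zpow_natCast, Nat.cast_succ,
      List.flatMap_cons, List.map_append, List.prod_append, List.map_cons, List.map_nil,
      List.prod_cons, List.prod_nil, mul_one] at *
    rw [key]
    simp only [mul_assoc]
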